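/- arXiv:0911.3679 — 3 statements merged into one kernel-verified Lean document; each statement's English description precedes it below -/
import Mathlib

section
/- For the affine-linear forms f1(x1,x2) = -2x1 + 3x2 - 6, f2(x1,x2) = 3x1 - 4x2 - 6, f3(x1,x2) = -9x1 + 10x2 - 6, there is no integral point (x1,x2) ∈ Z^2 such that f1(x1,x2), f2(x1,x2), f3(x1,x2) are all (positive) prime numbers. -/
/-- The three forms -2x₁+3x₂-6, 3x₁-4x₂-6, -9x₁+10x₂-6 never simultaneously take
positive prime values. -/
theorem stmt_1 :
    ¬ ∃ x1 x2 : ℤ,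
      (0 < -2 * x1 + 3 * x2 - 6 ∧ Prime (-2 * x1 + 3 * x2 - 6)) ∧
      (0 < 3 * x1 - 4 * x2 - 6 ∧ Prime (3 * x1 - 4 * x2 - 6)) ∧
      (0 < -9 * x1 + 10 * x2 - 6 ∧ Prime (-9 * x1 + 10 * x2 - 6)) := by
  rintro ⟨x1, x2, ⟨h1, -⟩, ⟨h2, -⟩, ⟨h3, -⟩⟩
  omega
end

section
/- Let F = (f1, ..., fm) with fi(x) = a_{i1}x1 + ... + a_{in}xn + bi be an admissible linear polynomial map on Z^n. Then for any positive integer c there exists an integral point x ∈ Z^n such that every prime divisor of ∏_{i=1}^{m} fi(x) is greater than c, and moreover a_{i1}x1 + ... + a_{in}xn > e for each i, where e = max_{1≤j≤m}(|a_{j1}| + ... + |a_{jn}|). -/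
open Finset in
/-- Lemma 1: if fᵢ(x) = ∑ⱼ aᵢⱼ xⱼ + bᵢ is an admissible linear map, then for every
positive integer c there is an integral point x whose values have all prime divisors
greater than c, with each linear part exceeding e = maxⱼ ∑ₖ |aⱼₖ|. -/
theorem stmt_5 (m n : ℕ) (hm : 0 < m) (a : Fin m → Fin n → ℤ) (b : Fin m → ℤ)
    (hadm : ∀ r : ℕ, 0 < r → ∃ x : Fin n → ℤ,
      (∀ i, 1 < ∑ j, a i j * x j + b i) ∧
      Int.gcd (∏ i, (∑ j, a i j * x j + b i)) r = 1)
    (c : ℕ) (hc : 0 < c) :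
    ∃ x : Fin n → ℤ,
      (∀ p : ℕ, p.Prime → (p : ℤ) ∣ ∏ i, (∑ j, a i j * x j + b i) → c < p) ∧
      ∀ i, (Finset.univ.sup' ⟨⟨0, hm⟩, Finset.mem_univ _⟩ fun j => ∑ k, |a j k|) <
        ∑ j, a i j * x j := by
  set E : ℤ := Finset.univ.sup' ⟨⟨0, hm⟩, Finset.mem_univ _⟩ fun j => ∑ k, |a j k| with hE
  set M : ℕ := max c (Finset.univ.sup fun i : Fin m => (E + b i).toNat) with hM
  have hMc : c ≤ M := le_max_left _ _
  obtain ⟨x, hx1, hx2⟩ := hadm M.factorial M.factorial_pos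
  set P : ℤ := ∏ i, (∑ j, a i j * x j + b i) with hP
  -- key: any prime dividing P is > M
  have key : ∀ p : ℕ, p.Prime → p ∣ P.natAbs → M < p := by
    intro p hp hdvd
    by_contra h
    push_neg at h
    have h1 : p ∣ M.factorial := Nat.dvd_factorial hp.pos h
    have h2 : p ∣ Nat.gcd P.natAbs M.factorial := Nat.dvd_gcd hdvd h1
    have h3 : Int.gcd P (M.factorial : ℤ) = Nat.gcd P.natAbs M.factorial := by
      simp [Int.gcd]
    rw [h3] at hx2
    rw [hx2] at h2
    exact hp.one_lt.ne' (Nat.eq_one_of_dvd_one h2)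
  refine ⟨x, ?_, ?_⟩
  · intro p hp hdvd
    have : p ∣ P.natAbs := by
      have := Int.natAbs_dvd_natAbs.mpr hdvd
      simpa using this
    exact lt_of_le_of_lt hMc (key p hp this)
  · intro i
    set f : ℤ := ∑ j, a i j * x j + b i with hf
    have hf1 : 1 < f := hx1 i
    have hfP : f ∣ P := Finset.dvd_prod_of_mem _ (Finset.mem_univ i)
    have hne : f.natAbs ≠ 1 := by
      intro h
      have := Int.natAbs_eq f
      omega
    obtain ⟨p, hp, hpd⟩ := Nat.exists_prime_and_dvd hne
    have hpP : p ∣ P.natAbs := hpd.trans (Int.natAbs_dvd_natAbs.mpr hfP)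
    have hpM : M < p := key p hp hpP
    have hpf : (p : ℤ) ≤ f := by
      refine Int.le_of_dvd (by omega) ?_
      have : (p : ℤ) ∣ (f.natAbs : ℤ) := Int.natCast_dvd_natCast.mpr hpd
      rwa [Int.natAbs_of_nonneg (by omega)] at this
    have hEb : E + b i ≤ ((E + b i).toNat : ℤ) := Int.self_le_toNat _
    have hle : (E + b i).toNat ≤ M :=
      le_trans (Finset.le_sup (f := fun i : Fin m => (E + b i).toNat) (Finset.mem_univ i)) (le_max_right _ _)
    have : E + b i < f := by
      have h1 : ((E + b i).toNat : ℤ) ≤ (M : ℤ) := Int.ofNat_le.mpr hle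
      have h2 : (M : ℤ) < (p : ℤ) := Int.ofNat_lt.mpr hpM
      linarith
    have : E < ∑ j, a i j * x j := by rw [hf] at this; linarith
    exact this
end

section
/- If a linear polynomial map F = (f1, ..., fm) on Z^n (fi affine-linear with integer coefficients) is admissible, then F is strongly admissible. -/
lemma aux_two_mul_le (j : ℕ) (h : 3 ≤ j) : 2*j+1 ≤ 2^j := by
  induction j with
  | zero => omega
  | succ j ih =>
    rcases Nat.lt_or_ge j 3 with hj | hj
    · interval_cases j <;> first | omega | norm_num
    · have h1 := ih hj
      have h2 : 2 ^ j ≥ 2 := by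
        calc 2 ≤ 2*j+1 := by omega
          _ ≤ 2^j := h1
      rw [pow_succ]; omega

lemma sq_le_two_pow (j : ℕ) (h : 4 ≤ j) : j*j ≤ 2^j := by
  induction j with
  | zero => omega
  | succ j ih =>
    rcases Nat.lt_or_ge j 4 with hj | hj
    · interval_cases j <;> first | omega | norm_num
    · have h1 := ih hj
      have h2 := aux_two_mul_le j (by omega)
      rw [pow_succ]; nlinarith

lemma count_ap_le (p L u1 : ℕ) (hpp : p.Prime) (α β : ℤ) (hβ : ¬ (p:ℤ) ∣ β) :
    ((Finset.Ico u1 (u1+L)).filter (fun u : ℕ => (p:ℤ) ∣ α + β * u)).card ≤ L / p + 1 := by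
  classical
  have hp : 0 < p := hpp.pos
  have key : ∀ u ∈ (Finset.Ico u1 (u1+L)).filter (fun u : ℕ => (p:ℤ) ∣ α + β * u),
      ∀ u' ∈ (Finset.Ico u1 (u1+L)).filter (fun u : ℕ => (p:ℤ) ∣ α + β * u),
      u ≤ u' → ∃ d : ℕ, u' = u + p * d := by
    intro u hu u' hu' hle
    simp only [Finset.mem_filter] at hu hu'
    have h1 : (p:ℤ) ∣ β * ((u':ℤ) - (u:ℤ)) := by
      have hh := dvd_sub hu'.2 hu.2
      have he : (α + β * u') - (α + β * u) = β * ((u':ℤ) - u) := by ring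
      rwa [he] at hh
    have h3 : (p:ℤ) ∣ ((u':ℤ) - (u:ℤ)) :=
      ((Nat.prime_iff_prime_int.mp hpp).dvd_mul.mp h1).resolve_left hβ
    have h4 : p ∣ (u' - u) := by
      have h5 : ((u' - u : ℕ) : ℤ) = (u' : ℤ) - u := by omega
      rw [← h5] at h3
      exact_mod_cast h3
    obtain ⟨d, hd⟩ := h4
    exact ⟨d, by omega⟩
  apply le_trans (Finset.card_le_card_of_injOn (fun u => (u - u1) / p) ?_ ?_)
    (le_of_eq (Finset.card_range (L/p+1)))
  · intro u hu
    simp only [Finset.mem_coe, Finset.mem_filter, Finset.mem_Ico] at hu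
    simp only [Finset.mem_coe, Finset.mem_range]
    have h6 : u - u1 ≤ L := by omega
    have h7 := Nat.div_le_div_right (c := p) h6
    omega
  · intro u hu u' hu' heq
    rw [Finset.mem_coe] at hu hu'
    have hb : u1 ≤ u ∧ u < u1 + L := by
      have := hu; simp only [Finset.mem_filter, Finset.mem_Ico] at this; exact this.1
    have hb' : u1 ≤ u' ∧ u' < u1 + L := by
      have := hu'; simp only [Finset.mem_filter, Finset.mem_Ico] at this; exact this.1
    simp only at heq
    rcases le_total u u' with hle | hle
    · obtain ⟨d, hd⟩ := key u hu u' hu' hle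
      have h8 : u' - u1 = (u - u1) + p * d := by
        rw [hd]; generalize p * d = w; omega
      rw [h8, Nat.add_mul_div_left _ _ hp] at heq
      have hd0 : d = 0 := by omega
      rw [hd0] at hd; omega
    · obtain ⟨d, hd⟩ := key u' hu' u hu hle
      have h8 : u - u1 = (u' - u1) + p * d := by
        rw [hd]; generalize p * d = w; omega
      rw [h8, Nat.add_mul_div_left _ _ hp] at heq
      have hd0 : d = 0 := by omega
      rw [hd0] at hd; omega

set_option maxHeartbeats 8000000 in
/-- An admissible linear polynomial map on ℤⁿ is strongly admissible (main content of
Theorem 1). -/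
theorem stmt_7 (m n : ℕ) (a : Fin m → Fin n → ℤ) (b : Fin m → ℤ)
    (hadm : ∀ r : ℕ, 0 < r → ∃ x : Fin n → ℤ,
      (∀ i, 1 < ∑ j, a i j * x j + b i) ∧
      Int.gcd (∏ i, (∑ j, a i j * x j + b i)) r = 1) :
    ∃ C : ℕ, 0 < C ∧ ∀ k : ℕ, C ≤ k → ∃ x : Fin n → ℤ,
      ∀ i, 1 < ∑ j, a i j * x j + b i ∧ (∑ j, a i j * x j + b i) ≤ (k : ℤ) ∧
        Int.gcd (∑ j, a i j * x j + b i) k = 1 := by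
  classical
  rcases Nat.eq_zero_or_pos m with hm | hm
  · subst hm
    exact ⟨1, one_pos, fun k _ => ⟨0, fun i => i.elim0⟩⟩
  -- linearity
  have hlin : ∀ (x w : Fin n → ℤ) (s : ℤ) (i : Fin m),
      (∑ j, a i j * (x j + s * w j)) = (∑ j, a i j * x j) + s * (∑ j, a i j * w j) := by
    intro x w s i
    rw [Finset.mul_sum, ← Finset.sum_add_distrib]
    apply Finset.sum_congr rfl
    intro j _
    ring
  -- Step A : a direction with all linear parts positive
  obtain ⟨x1, hx1, -⟩ := hadm 1 one_pos
  set B : ℕ := (∑ i, (∑ j, a i j * x1 j + b i)).toNat with hB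
  have hBc : (B:ℤ) = ∑ i, (∑ j, a i j * x1 j + b i) := by
    rw [hB]
    exact Int.toNat_of_nonneg
      (Finset.sum_nonneg (fun i _ => le_of_lt (lt_trans zero_lt_one (hx1 i))))
  have hBi : ∀ i, (∑ j, a i j * x1 j + b i) ≤ (B:ℤ) := by
    intro i
    rw [hBc]
    exact Finset.single_le_sum (f := fun i => ∑ j, a i j * x1 j + b i)
      (fun i _ => le_of_lt (lt_trans zero_lt_one (hx1 i))) (Finset.mem_univ i)
  clear_value B
  obtain ⟨x2, hx2, hg2⟩ := hadm (Nat.factorial B) (Nat.factorial_pos B)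
  have hx2B : ∀ i, (B:ℤ) < ∑ j, a i j * x2 j + b i := by
    intro i
    by_contra hle
    push_neg at hle
    have h2 : (1:ℤ) < ∑ j, a i j * x2 j + b i := hx2 i
    set g : ℕ := (∑ j, a i j * x2 j + b i).toNat with hg
    have hgc : (g:ℤ) = ∑ j, a i j * x2 j + b i := Int.toNat_of_nonneg (by omega)
    clear_value g
    have hg2' : 2 ≤ g := by omega
    have hgB : g ≤ B := by omega
    have hdvd : g ∣ B.factorial := Nat.dvd_factorial (by omega) hgB
    have h1 : (∑ j, a i j * x2 j + b i) ∣ ∏ i, (∑ j, a i j * x2 j + b i) :=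
      Finset.dvd_prod_of_mem _ (Finset.mem_univ i)
    have h2' : g ∣ (∏ i, (∑ j, a i j * x2 j + b i)).natAbs := by
      have h3 := Int.natAbs_dvd_natAbs.mpr h1
      rwa [← hgc, Int.natAbs_natCast] at h3
    have h4 : g ∣ Int.gcd (∏ i, (∑ j, a i j * x2 j + b i)) (B.factorial : ℤ) :=
      Nat.dvd_gcd h2' (by simpa using hdvd)
    rw [hg2] at h4
    have h5 := Nat.dvd_one.mp h4
    omega
  set v : Fin n → ℤ := fun j => x2 j - x1 j with hv
  set c : Fin m → ℤ := fun i => ∑ j, a i j * v j with hc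
  have hc1 : ∀ i, 1 ≤ c i := by
    intro i
    have he : (∑ j, a i j * x2 j) = (∑ j, a i j * x1 j) + 1 * (∑ j, a i j * v j) := by
      have h0 := hlin x1 v 1 i
      calc ∑ j, a i j * x2 j = ∑ j, a i j * (x1 j + 1 * v j) := by
            apply Finset.sum_congr rfl; intro j _; simp [hv]
        _ = _ := h0
    have h1 := hx2B i
    have h2 := hBi i
    rw [one_mul] at he
    simp only [hc]
    omega
  clear_value v c
  -- bounds W and A
  set W : ℕ := (∑ i, c i).toNat with hW
  have hWc : (W:ℤ) = ∑ i, c i := by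
    rw [hW]
    exact Int.toNat_of_nonneg
      (Finset.sum_nonneg (fun i _ => le_trans zero_le_one (hc1 i)))
  have hWi : ∀ i, c i ≤ (W:ℤ) := by
    intro i
    rw [hWc]
    exact Finset.single_le_sum (f := fun i => c i)
      (fun i _ => le_trans zero_le_one (hc1 i)) (Finset.mem_univ i)
  have hW1 : 1 ≤ W := by
    have h1 := hc1 ⟨0, hm⟩
    have h2 := hWi ⟨0, hm⟩
    omega
  clear_value W
  set A : ℕ := (∑ i, ((∑ j, (a i j).natAbs) + (b i).natAbs)) + 1 with hA
  have hAi : ∀ i, (∑ j, (a i j).natAbs) + (b i).natAbs < A := by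
    intro i
    have h0 : ((∑ j, (a i j).natAbs) + (b i).natAbs)
        ≤ ∑ i, ((∑ j, (a i j).natAbs) + (b i).natAbs) :=
      Finset.single_le_sum (f := fun i => (∑ j, (a i j).natAbs) + (b i).natAbs)
        (fun _ _ => Nat.zero_le _) (Finset.mem_univ i)
    omega
  have hA1 : 1 ≤ A := by omega
  clear_value A
  have hFb : ∀ (i : Fin m) (y : Fin n → ℤ) (q : ℕ), 1 ≤ q → (∀ j, |y j| ≤ (q:ℤ)) →
      |∑ j, a i j * y j + b i| ≤ ((A*q : ℕ) : ℤ) := by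
    intro i y q hq hy
    have h1 : |∑ j, a i j * y j| ≤ (∑ j, |a i j|) * (q:ℤ) := by
      rw [Finset.sum_mul]
      refine le_trans (Finset.abs_sum_le_sum_abs _ _) ?_
      apply Finset.sum_le_sum
      intro j _
      rw [abs_mul]
      exact mul_le_mul_of_nonneg_left (hy j) (abs_nonneg _)
    have h3 : (∑ j, (a i j).natAbs) + (b i).natAbs < A := hAi i
    have h3' : ((∑ j, (a i j).natAbs : ℕ) : ℤ) + (((b i).natAbs : ℕ) : ℤ) + 1 ≤ (A:ℤ) := by
      exact_mod_cast h3
    push_cast at h3'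
    have hq' : (1:ℤ) ≤ (q:ℤ) := by exact_mod_cast hq
    calc |∑ j, a i j * y j + b i| ≤ |∑ j, a i j * y j| + |b i| := abs_add_le _ _
      _ ≤ (∑ j, |a i j|) * (q:ℤ) + |b i| := by linarith
      _ ≤ ((A*q : ℕ) : ℤ) := by
          push_cast
          have e1 : |b i| ≤ |b i| * (q:ℤ) := le_mul_of_one_le_right (abs_nonneg _) hq'
          have e2 : ((∑ j, |a i j|) + |b i|) * (q:ℤ) ≤ (A:ℤ) * q :=
            mul_le_mul_of_nonneg_right (by linarith only [h3', abs_nonneg (b i)])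
              (by linarith only [hq'])
          calc (∑ j, |a i j|)*(q:ℤ) + |b i| ≤ (∑ j, |a i j|)*(q:ℤ) + |b i| * q := by
                linarith only [e1]
            _ = ((∑ j, |a i j|) + |b i|) * q := by ring
            _ ≤ (A:ℤ) * q := e2
  -- constants
  set G : ℕ := 2^(64*m + 64) with hG
  have hG2 : 64*m + 64 ≤ G := by rw [hG]; exact (Nat.lt_two_pow_self).le
  clear_value G
  set B1 : ℕ := W + 5*m + G with hB1
  clear_value B1
  set K2 : ℕ := 8*(A+1)*W*4^B1 with hK2
  clear_value K2
  set t1 : ℕ := 4*(B1 + Nat.log 2 K2 + 40) with ht1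
  clear_value t1
  have hC0 : 0 < 2^t1 := by positivity
  refine ⟨2^t1, hC0, ?_⟩
  intro k hk
  set t : ℕ := Nat.log 2 k with ht
  clear_value t
  have hk0 : 0 < k := by omega
  have htt : t1 ≤ t := by
    rw [ht]
    calc t1 = Nat.log 2 (2^t1) := (Nat.log_pow (by norm_num) t1).symm
      _ ≤ Nat.log 2 k := Nat.log_mono_right hk
  have h2t : 2^t ≤ k := by
    rw [ht]
    exact Nat.pow_log_le_self 2 (by omega)
  set T : ℕ := t/8 + B1 with hT
  clear_value T
  have hB1big : G ≤ B1 := by omega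
  have hB1' : 64*m + 64 ≤ B1 := by omega
  have hT1 : 1 ≤ T := by omega
  -- main size estimates
  have hs4 : B1 + 40 ≤ t/4 := by omega
  have ha : T + 1 ≤ 2^(t/4) := by
    have h1 : t + B1 + 1 ≤ (t/4)*(t/4) := by
      have h3 : (B1+40) * (t/4) ≤ (t/4) * (t/4) := Nat.mul_le_mul_right _ hs4
      have e40 : 4*(t/4)+4 ≤ 40*(t/4) := by omega
      have eB : B1 ≤ B1*(t/4) := Nat.le_mul_of_pos_right _ (by omega)
      calc t + B1 + 1 ≤ (4*(t/4)+4) + B1 := by omega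
        _ ≤ 40*(t/4) + B1*(t/4) := add_le_add e40 eB
        _ = (B1+40)*(t/4) := by ring
        _ ≤ (t/4)*(t/4) := h3
    have h2 : (t/4)*(t/4) ≤ 2^(t/4) := sq_le_two_pow _ (by omega)
    calc T + 1 ≤ t + B1 + 1 := by omega
      _ ≤ (t/4)*(t/4) := h1
      _ ≤ 2^(t/4) := h2
  have hb2 : K2 ≤ 2^(t/4) := by
    have h1 : K2 < 2^(Nat.log 2 K2 + 1) := Nat.lt_pow_succ_log_self (by norm_num) _
    have h2 : Nat.log 2 K2 + 1 ≤ t/4 := by omega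
    exact le_trans (le_of_lt h1) (Nat.pow_le_pow_right (by norm_num) h2)
  have hC2 : K2 * 2^(t/4) * (T+1) ≤ k := by
    calc K2 * 2^(t/4) * (T+1) ≤ 2^(t/4) * 2^(t/4) * 2^(t/4) :=
          Nat.mul_le_mul (Nat.mul_le_mul hb2 le_rfl) ha
      _ = 2^(t/4 + t/4 + t/4) := by rw [pow_add, pow_add]
      _ ≤ 2^t := Nat.pow_le_pow_right (by norm_num) (by omega)
      _ ≤ k := h2t
  -- the modulus q of small primes
  set q : ℕ := ∏ p ∈ k.primeFactors.filter (fun p => p ≤ T), p with hqdef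
  clear_value q
  have hq1 : 1 ≤ q := by
    rw [hqdef]
    exact Finset.prod_pos (fun p hp =>
      (Nat.prime_of_mem_primeFactors (Finset.mem_filter.mp hp).1).pos)
  have hqk : q ∣ k := by
    rw [hqdef]
    exact dvd_trans (Finset.prod_dvd_prod_of_subset _ _ _ (Finset.filter_subset _ _))
      (Nat.prod_primeFactors_dvd k)
  have hqb : q ≤ 4^B1 * 2^(t/4) := by
    have h1 : q ≤ primorial T := by
      rw [hqdef, primorial]
      apply Finset.prod_le_prod_of_subset_of_one_le'
      · intro p hp
        have hp' := Finset.mem_filter.mp hp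
        refine Finset.mem_filter.mpr ⟨Finset.mem_range.mpr ?_, Nat.prime_of_mem_primeFactors hp'.1⟩
        omega
      · intro p hp _
        exact (Finset.mem_filter.mp hp).2.one_lt.le
    have h2 : (4:ℕ)^(t/8) ≤ 2^(t/4) := by
      have h3 : (4:ℕ)^(t/8) = 2^(2*(t/8)) := by rw [pow_mul]; norm_num
      rw [h3]
      exact Nat.pow_le_pow_right (by norm_num) (by omega)
    calc q ≤ primorial T := h1
      _ ≤ 4^T := primorial_le_4_pow T
      _ = 4^(t/8) * 4^B1 := by rw [hT, pow_add]
      _ ≤ 2^(t/4) * 4^B1 := Nat.mul_le_mul_right _ h2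
      _ = 4^B1 * 2^(t/4) := mul_comm _ _
  -- base point y, reduced mod q
  obtain ⟨y0, hy0, hgy0⟩ := hadm q hq1
  set y : Fin n → ℤ := fun j => y0 j % (q:ℤ) with hy
  have hq0' : (0:ℤ) < (q:ℤ) := by exact_mod_cast hq1
  have hyabs : ∀ j, |y j| ≤ (q:ℤ) := by
    intro j
    have h1 : 0 ≤ y j := Int.emod_nonneg _ (by omega)
    have h2 : y j < (q:ℤ) := Int.emod_lt_of_pos _ hq0'
    rw [abs_of_nonneg h1]
    omega
  have hEb : ∀ i, |∑ j, a i j * y j + b i| ≤ ((A*q:ℕ):ℤ) := fun i => hFb i y q hq1 hyabs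
  have hyE : ∀ i, (q:ℤ) ∣ ((∑ j, a i j * y j + b i) - (∑ j, a i j * y0 j + b i)) := by
    intro i
    have h1 : (∑ j, a i j * y j + b i) - (∑ j, a i j * y0 j + b i)
        = ∑ j, a i j * (y j - y0 j) := by
      have h2 : ∀ j ∈ Finset.univ, a i j * (y j - y0 j) = a i j * y j - a i j * y0 j := by
        intro j _; ring
      rw [Finset.sum_congr rfl h2, Finset.sum_sub_distrib]
      ring
    rw [h1]
    apply Finset.dvd_sum
    intro j _
    have h3 : y j - y0 j = -((q:ℤ) * (y0 j / (q:ℤ))) := by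
      have h4 := Int.mul_ediv_add_emod (y0 j) (q:ℤ)
      simp only [hy]
      linarith
    rw [h3]
    exact Dvd.dvd.mul_left (dvd_neg.mpr (dvd_mul_right _ _)) _
  -- interval parameters
  set u1 : ℕ := A + 2 with hu1
  clear_value u1
  set D : ℕ := 8*(A+1)*W*q with hD
  have hD0 : 0 < D := by
    rw [hD]
    have h1 : 0 < 8*(A+1) := by omega
    exact Nat.mul_pos (Nat.mul_pos h1 (by omega)) (by omega)
  clear_value D
  set L : ℕ := k / D with hL
  clear_value L
  have hDb : D ≤ K2 * 2^(t/4) := by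
    rw [hD, hK2]
    calc 8*(A+1)*W*q ≤ 8*(A+1)*W*(4^B1 * 2^(t/4)) := Nat.mul_le_mul_left _ hqb
      _ = 8*(A+1)*W*4^B1 * 2^(t/4) := by ring
  have hLT : T + 1 ≤ L := by
    rw [hL, Nat.le_div_iff_mul_le hD0]
    calc (T+1) * D ≤ (T+1) * (K2 * 2^(t/4)) := Nat.mul_le_mul_left _ hDb
      _ = K2 * 2^(t/4) * (T+1) := by ring
      _ ≤ k := hC2
  -- large primes
  set P : Finset ℕ := k.primeFactors.filter (fun p => T < p) with hP
  clear_value P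
  have hPp : ∀ p ∈ P, p.Prime := by
    intro p hp
    rw [hP] at hp
    exact Nat.prime_of_mem_primeFactors (Finset.mem_filter.mp hp).1
  have hPT : ∀ p ∈ P, T < p := by
    intro p hp
    rw [hP] at hp
    exact (Finset.mem_filter.mp hp).2
  have hPdvd : (∏ p ∈ P, p) ∣ k := by
    rw [hP]
    exact dvd_trans (Finset.prod_dvd_prod_of_subset _ _ _ (Finset.filter_subset _ _))
      (Nat.prod_primeFactors_dvd k)
  set J0 : ℕ := Nat.log (T+1) k with hJ0
  clear_value J0
  have hPcard : P.card ≤ J0 := by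
    have h1 : (T+1)^P.card ≤ ∏ p ∈ P, p :=
      Finset.pow_card_le_prod _ _ _ (fun p hp => by have := hPT p hp; omega)
    have h2 : ∏ p ∈ P, p ≤ k := Nat.le_of_dvd hk0 hPdvd
    rw [hJ0]
    exact (Nat.le_log_iff_pow_le (by omega) (by omega)).mpr (le_trans h1 h2)
  have hJt : (64*m+64)*J0 ≤ t := by
    have h1 : (T+1)^J0 ≤ k := by
      rw [hJ0]
      exact Nat.pow_log_le_self (T+1) (by omega)
    have h2 : G ≤ T+1 := by omega
    have h2' : (2:ℕ)^(64*m+64) ≤ T+1 := by rw [← hG]; exact h2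
    have h3 : ((2:ℕ)^(64*m+64))^J0 ≤ k := le_trans (Nat.pow_le_pow_left h2' _) h1
    have h4 : (2:ℕ)^((64*m+64)*J0) ≤ k := by rw [pow_mul]; exact h3
    have h5 := (Nat.le_log_iff_pow_le one_lt_two (show k ≠ 0 by omega)).mpr h4
    omega
  have h4m : 4*m*(J0+1) ≤ T := by
    have h1 : 4*m*J0 ≤ t/16 := by
      rw [Nat.le_div_iff_mul_le (by norm_num)]
      calc 4*m*J0*16 = 64*(m*J0) := by ring
        _ ≤ (64*m+64)*J0 := le_trans (Nat.le_add_right _ (64*J0)) (le_of_eq (by ring))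
        _ ≤ t := hJt
    have h2 : 4*m ≤ B1 := by omega
    calc 4*m*(J0+1) = 4*m*J0 + 4*m := by ring
      _ ≤ t/16 + B1 := add_le_add h1 h2
      _ ≤ t/8 + B1 := by omega
      _ = T := by rw [hT]
  -- linear coefficients not divisible by large primes
  have hpc : ∀ p ∈ P, ∀ i : Fin m, ¬ (p:ℤ) ∣ ((q:ℤ) * c i) := by
    intro p hp i hdvd
    have hpr := hPp p hp
    rcases (Nat.prime_iff_prime_int.mp hpr).dvd_mul.mp hdvd with h | h
    · have h1 : p ∣ q := by exact_mod_cast h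
      rw [hqdef] at h1
      obtain ⟨p', hp', hpp'⟩ := hpr.prime.exists_mem_finset_dvd h1
      have heq : p = p' := (Nat.prime_dvd_prime_iff_eq hpr
        (Nat.prime_of_mem_primeFactors (Finset.mem_filter.mp hp').1)).mp hpp'
      have hp'T : p' ≤ T := (Finset.mem_filter.mp hp').2
      have := hPT p hp
      omega
    · have h2 : (0:ℤ) < c i := by have := hc1 i; omega
      have h3 : (p:ℤ) ≤ c i := Int.le_of_dvd h2 h
      have h4 := hWi i
      have h5 := hPT p hp
      omega
  -- find a good u in the interval
  set Ivl : Finset ℕ := Finset.Ico u1 (u1+L) with hIvl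
  set BadPI : ℕ → Fin m → Finset ℕ := fun p i => Ivl.filter
    (fun u => (p:ℤ) ∣ ((∑ j, a i j * y j + b i) + (q:ℤ) * c i * u)) with hBadPI
  set BadP : ℕ → Finset ℕ := fun p => Ivl.filter
    (fun u => ∃ i : Fin m, (p:ℤ) ∣ ((∑ j, a i j * y j + b i) + (q:ℤ) * c i * u)) with hBadP
  have hgood : ∃ u, u ∈ Finset.Ico u1 (u1+L) ∧ ∀ p ∈ P, ∀ i : Fin m,
      ¬ (p:ℤ) ∣ ((∑ j, a i j * y j + b i) + (q:ℤ) * c i * u) := by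
    by_contra hno
    push_neg at hno
    have hsub : Ivl ⊆ P.biUnion BadP := by
      intro u hu
      obtain ⟨p, hp, i, hdvd⟩ := hno u (by rwa [hIvl] at hu)
      refine Finset.mem_biUnion.mpr ⟨p, hp, ?_⟩
      rw [hBadP]
      exact Finset.mem_filter.mpr ⟨hu, ⟨i, hdvd⟩⟩
    have hcard : L ≤ ∑ p ∈ P, (BadP p).card := by
      have h1 : Ivl.card = L := by rw [hIvl, Nat.card_Ico]; omega
      have h2 := Finset.card_le_card hsub
      have h3 := Finset.card_biUnion_le (s := P) (t := BadP)
      omega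
    have hb1 : ∀ p ∈ P, (BadP p).card ≤ m * (L/(T+1) + 1) := by
      intro p hp
      have hsub2 : BadP p ⊆ (Finset.univ : Finset (Fin m)).biUnion (fun i => BadPI p i) := by
        intro u hu
        rw [hBadP] at hu
        obtain ⟨hu1', i, hdvd⟩ := Finset.mem_filter.mp hu
        refine Finset.mem_biUnion.mpr ⟨i, Finset.mem_univ i, ?_⟩
        rw [hBadPI]
        exact Finset.mem_filter.mpr ⟨hu1', hdvd⟩
      have hstep : ∀ i : Fin m, (BadPI p i).card ≤ L/p + 1 := by
        intro i
        rw [hBadPI]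
        simp only [hIvl]
        exact count_ap_le p L u1 (hPp p hp) (∑ j, a i j * y j + b i) ((q:ℤ) * c i)
          (hpc p hp i)
      have hdivle : L/p + 1 ≤ L/(T+1) + 1 := by
        have h6 := hPT p hp
        have := Nat.div_le_div_left (show T+1 ≤ p by omega) (show 0 < T+1 by omega) (a := L)
        omega
      have h2 := Finset.card_le_card hsub2
      have h3 := Finset.card_biUnion_le (s := (Finset.univ : Finset (Fin m)))
        (t := fun i => BadPI p i)
      have h4 : (∑ i : Fin m, (BadPI p i).card) ≤ ∑ _i : Fin m, (L/(T+1) + 1) :=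
        Finset.sum_le_sum (fun i _ => le_trans (hstep i) hdivle)
      have h5 : (∑ _i : Fin m, (L/(T+1) + 1)) = m * (L/(T+1) + 1) := by
        rw [Finset.sum_const, Finset.card_univ, Fintype.card_fin, smul_eq_mul]
      omega
    have htot : L ≤ P.card * (m * (L/(T+1)+1)) := by
      refine le_trans hcard ?_
      have := Finset.sum_le_card_nsmul P _ (m * (L/(T+1)+1)) hb1
      simpa using this
    have hX : (L/(T+1)) * (T+1) ≤ L := Nat.div_mul_le_self L (T+1)
    have h5 : P.card * (m * (L/(T+1)+1)) * 4 ≤ T * (L/(T+1)+1) := by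
      calc P.card * (m * (L/(T+1)+1)) * 4 = (4*m*P.card) * (L/(T+1)+1) := by ring
        _ ≤ (4*m*(J0+1)) * (L/(T+1)+1) := by
            apply Nat.mul_le_mul_right
            exact Nat.mul_le_mul_left _ (by omega)
        _ ≤ T * (L/(T+1)+1) := Nat.mul_le_mul_right _ h4m
    have h6 : T * (L/(T+1)+1) ≤ 2*L := by
      calc T * (L/(T+1)+1) = T * (L/(T+1)) + T := by ring
        _ ≤ (T+1) * (L/(T+1)) + T :=
            add_le_add_left (Nat.mul_le_mul_right _ (by omega)) _
        _ ≤ L + L := by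
            apply add_le_add
            · rw [mul_comm]; exact hX
            · omega
        _ = 2*L := by ring
    have h7 : L * 4 ≤ 2 * L := by
      calc L * 4 ≤ P.card * (m * (L/(T+1)+1)) * 4 := Nat.mul_le_mul_right _ htot
        _ ≤ T * (L/(T+1)+1) := h5
        _ ≤ 2*L := h6
    omega
  obtain ⟨u, hu, hgoodu⟩ := hgood
  clear_value Ivl BadPI BadP
  clear hIvl hBadPI hBadP
  have huIco := Finset.mem_Ico.mp hu
  -- the final point
  set x : Fin n → ℤ := fun j => y j + ((q:ℤ) * u) * v j with hx
  refine ⟨x, ?_⟩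
  intro i
  have hsx : (∑ j, a i j * x j + b i) = (∑ j, a i j * y j + b i) + (q:ℤ) * c i * u := by
    have h0 := hlin y v ((q:ℤ)*u) i
    have h1 : (∑ j, a i j * x j) = ∑ j, a i j * (y j + ((q:ℤ)*u) * v j) := by
      apply Finset.sum_congr rfl
      intro j _
      simp [hx]
    rw [h1, h0]
    simp only [hc]
    ring
  clear_value x y
  have hE := hEb i
  have habs := abs_le.mp hE
  have hcaste : ((A*q:ℕ):ℤ) = (A:ℤ)*(q:ℤ) := by push_cast; ring
  have hq1' : (1:ℤ) ≤ (q:ℤ) := by exact_mod_cast hq1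
  have hu2 : ((A:ℤ) + 2) ≤ (u:ℤ) := by
    have h1 := huIco.1
    rw [hu1] at h1
    exact_mod_cast Nat.cast_le.mpr h1
  have hlow : 1 < (∑ j, a i j * y j + b i) + (q:ℤ) * c i * u := by
    have h1 : (q:ℤ) * 1 * u ≤ (q:ℤ) * c i * u := by
      exact mul_le_mul_of_nonneg_right (mul_le_mul_of_nonneg_left (hc1 i)
        (Int.natCast_nonneg q)) (Int.natCast_nonneg u)
    have h4 : (q:ℤ)*((A:ℤ)+2) ≤ (q:ℤ)*u :=
      mul_le_mul_of_nonneg_left hu2 (Int.natCast_nonneg q)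
    rw [hcaste] at habs
    have h1' : (q:ℤ)*1*(u:ℤ) = (q:ℤ)*(u:ℤ) := by ring
    rw [h1'] at h1
    have h6 : (q:ℤ)*((A:ℤ)+2) = (q:ℤ)*(A:ℤ) + 2*(q:ℤ) := by ring
    have h7 : (A:ℤ)*(q:ℤ) = (q:ℤ)*(A:ℤ) := by ring
    rw [h7] at habs
    linarith only [habs.1, h1, h4, hq1', h6]
  have hup : (∑ j, a i j * y j + b i) + (q:ℤ) * c i * u ≤ (k:ℤ) := by
    have hN : A*q + q*W*(u1 + L) ≤ k := by
      have hqWL : q*W*L ≤ k/8 := by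
        have h1 : k / D = (k/(q*W))/(8*(A+1)) := by
          rw [hD, Nat.div_div_eq_div_mul]
          congr 1
          ring
        have h2 : (q*W)*((k/(q*W))/(8*(A+1))) ≤ (q*W)*(k/(q*W))/(8*(A+1)) :=
          Nat.mul_div_le_mul_div_assoc _ _ _
        have h3 : (q*W)*(k/(q*W)) ≤ k := Nat.mul_div_le k (q*W)
        calc q*W*L = (q*W)*(k/D) := by rw [hL]
          _ = (q*W)*((k/(q*W))/(8*(A+1))) := by rw [h1]
          _ ≤ (q*W)*(k/(q*W))/(8*(A+1)) := h2
          _ ≤ k/(8*(A+1)) := Nat.div_le_div_right h3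
          _ ≤ k/8 := Nat.div_le_div_left (by omega) (by omega)
      have hqW2 : A*q + q*W*u1 ≤ k/2 := by
        have h1 : A*q + q*W*(A+2) ≤ 8*(A+1)*W*q := by
          calc A*q + q*W*(A+2) ≤ A*q*W + q*W*(A+2) :=
                add_le_add_left (Nat.le_mul_of_pos_right _ (by omega)) _
            _ = (2*A+2)*(W*q) := by ring
            _ ≤ (8*(A+1))*(W*q) := Nat.mul_le_mul_right _ (by omega)
            _ = 8*(A+1)*W*q := by ring
        have h2 : 8*(A+1)*W*q * 2 ≤ k := by
          calc 8*(A+1)*W*q*2 = D*2 := by rw [hD]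
            _ ≤ D*(T+1) := Nat.mul_le_mul_left _ (by omega)
            _ ≤ (K2*2^(t/4))*(T+1) := Nat.mul_le_mul_right _ hDb
            _ ≤ k := hC2
        have h3 : 8*(A+1)*W*q ≤ k/2 := by
          rw [Nat.le_div_iff_mul_le (by norm_num)]
          omega
        rw [hu1]
        exact le_trans h1 h3
      calc A*q + q*W*(u1+L) = (A*q + q*W*u1) + q*W*L := by ring
        _ ≤ k/2 + k/8 := add_le_add hqW2 hqWL
        _ ≤ k := by omega
    have h1 : (q:ℤ) * c i * u ≤ (q:ℤ)*W*u := by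
      exact mul_le_mul_of_nonneg_right (mul_le_mul_of_nonneg_left (hWi i)
        (Int.natCast_nonneg q)) (Int.natCast_nonneg u)
    have h2 : (u:ℤ) ≤ (u1:ℤ) + (L:ℤ) := by
      have h3 := huIco.2
      have h4 : u ≤ u1 + L := by omega
      exact_mod_cast Nat.cast_le.mpr h4
    have h1b : (q:ℤ)*W*u ≤ (q:ℤ)*W*((u1:ℤ)+L) := by
      exact mul_le_mul_of_nonneg_left h2 (mul_nonneg (Int.natCast_nonneg q) (Int.natCast_nonneg W))
    have hNc : ((A*q + q*W*(u1+L) : ℕ):ℤ) ≤ (k:ℤ) := by exact_mod_cast hN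
    push_cast at hNc
    rw [hcaste] at habs
    linarith only [habs.2, h1, h1b, hNc]
  have hgcd : Int.gcd ((∑ j, a i j * y j + b i) + (q:ℤ) * c i * u) (k:ℤ) = 1 := by
    by_contra hne
    have hgs : (Int.gcd ((∑ j, a i j * y j + b i) + (q:ℤ) * c i * u) (k:ℤ) : ℤ) ∣
        ((∑ j, a i j * y j + b i) + (q:ℤ) * c i * u) := Int.gcd_dvd_left _ _
    have hgk : (Int.gcd ((∑ j, a i j * y j + b i) + (q:ℤ) * c i * u) (k:ℤ)) ∣ k := by
      have h1 : (Int.gcd ((∑ j, a i j * y j + b i) + (q:ℤ) * c i * u) (k:ℤ) : ℤ) ∣ (k:ℤ) :=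
        Int.gcd_dvd_right _ _
      exact_mod_cast h1
    obtain ⟨p, hpp, hpg⟩ := Nat.exists_prime_and_dvd hne
    have hpk : p ∣ k := dvd_trans hpg hgk
    have hps : (p:ℤ) ∣ ((∑ j, a i j * y j + b i) + (q:ℤ) * c i * u) :=
      dvd_trans (by exact_mod_cast hpg) hgs
    have hpf : p ∈ k.primeFactors := Nat.mem_primeFactors.mpr ⟨hpp, hpk, by omega⟩
    rcases le_or_gt p T with hpT | hpT
    · have hpq : p ∣ q := by
        rw [hqdef]
        exact Finset.dvd_prod_of_mem _ (Finset.mem_filter.mpr ⟨hpf, hpT⟩)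
      have hpq' : (p:ℤ) ∣ (q:ℤ) := by exact_mod_cast hpq
      have hpE : (p:ℤ) ∣ (∑ j, a i j * y j + b i) := by
        have h1 : (p:ℤ) ∣ (q:ℤ) * c i * u := Dvd.dvd.mul_right (Dvd.dvd.mul_right hpq' _) _
        have h2 := dvd_sub hps h1
        simpa using h2
      have hpE0 : (p:ℤ) ∣ (∑ j, a i j * y0 j + b i) := by
        have h2 := hyE i
        have h3 : (p:ℤ) ∣ ((∑ j, a i j * y j + b i) - (∑ j, a i j * y0 j + b i)) :=
          dvd_trans hpq' h2
        have h4 := dvd_sub hpE h3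
        have h5 : (∑ j, a i j * y j + b i) - ((∑ j, a i j * y j + b i)
            - (∑ j, a i j * y0 j + b i)) = ∑ j, a i j * y0 j + b i := by ring
        rwa [h5] at h4
      have hpprod : (p:ℤ) ∣ ∏ i', (∑ j, a i' j * y0 j + b i') :=
        dvd_trans hpE0 (Finset.dvd_prod_of_mem _ (Finset.mem_univ i))
      have h4 : p ∣ Int.gcd (∏ i', (∑ j, a i' j * y0 j + b i')) (q:ℤ) := by
        apply Nat.dvd_gcd
        · have h5 := Int.natAbs_dvd_natAbs.mpr hpprod
          simpa using h5
        · simpa using hpq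
      rw [hgy0] at h4
      have h5 := Nat.dvd_one.mp h4
      have := hpp.two_le
      omega
    · have hpP : p ∈ P := by
        rw [hP]
        exact Finset.mem_filter.mpr ⟨hpf, hpT⟩
      exact hgoodu p hpP i hps
  exact ⟨by rw [hsx]; exact hlow, by rw [hsx]; exact hup, by rw [hsx]; exact hgcd⟩
end
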